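/- arXiv:1310.1585 — 3 statements merged into one kernel-verified Lean document; each statement's English description precedes it below -/
import Mathlib

section
/- Let q ≥ 3 be an integer, let P be a face of the Farey graph 𝓕_q, and let u and v be two distinct vertices of P. If ⟨w_0, w_1, …, w_n⟩ is a path in 𝓕_q such that w_0 lies in one connected component of ℝ∞ \ {u, v} and w_n lies in the other connected component, then w_i ∈ {u, v} for some i. -/
open OnePoint

noncomputable def lamq (q : ℕ) : ℝ := 2 * Real.cos (Real.pi / q)

abbrev RInf : Type := OnePoint ℝ

noncomputable def sigmaFun : RInf → RInf := fun z =>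
  match z with
  | Option.none => ((0 : ℝ) : RInf)
  | Option.some x => if x = 0 then (∞ : RInf) else ((-x⁻¹ : ℝ) : RInf)

lemma sigmaFun_invol (z : RInf) : sigmaFun (sigmaFun z) = z := by
  cases z with
  | none => simp [sigmaFun, OnePoint.infty] <;> rfl
  | some x =>
    by_cases h : x = 0
    · simp only [sigmaFun, h, if_true, if_pos]
      rfl
    · simp only [sigmaFun, h, if_false]
      have h1 : (-x⁻¹ : ℝ) ≠ 0 := by simpa using h
      simp only [h1, if_false]
      have h2 : (-(-x⁻¹)⁻¹ : ℝ) = x := by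
        rw [inv_neg, inv_inv, neg_neg]
      rw [h2]
      rfl

noncomputable def sigmaP : Equiv.Perm RInf :=
  ⟨sigmaFun, sigmaFun, sigmaFun_invol, sigmaFun_invol⟩

noncomputable def tauP (q : ℕ) : Equiv.Perm RInf where
  toFun z := match z with
    | Option.none => (∞ : RInf)
    | Option.some x => Option.some (x + lamq q)
  invFun z := match z with
    | Option.none => (∞ : RInf)
    | Option.some x => Option.some (x - lamq q)
  left_inv z := by cases z <;> simp [OnePoint.infty] <;> rfl
  right_inv z := by cases z <;> simp [OnePoint.infty] <;> rfl

noncomputable def Gq (q : ℕ) : Subgroup (Equiv.Perm RInf) :=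
  Subgroup.closure {sigmaP, tauP q}

def FareyVertex (q : ℕ) (v : RInf) : Prop := ∃ g ∈ Gq q, g ∞ = v

def FareyAdj (q : ℕ) (u v : RInf) : Prop :=
  u ≠ v ∧ ∃ g ∈ Gq q,
    ((g ((0:ℝ) : RInf) = u ∧ g ∞ = v) ∨ (g ((0:ℝ) : RInf) = v ∧ g ∞ = u))

noncomputable def rhoP (q : ℕ) : Equiv.Perm RInf := tauP q * sigmaP

def V0 (q : ℕ) : Set RInf := {v | ∃ i : ℕ, i < q ∧ (rhoP q ^ i) ∞ = v}

def IsFace (q : ℕ) (P : Set RInf) : Prop := ∃ g ∈ Gq q, P = ⇑g '' V0 q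

/-- `y` lies in the connected component of `ℝ∞ \ {u, v}` that does not contain `x`. -/
def SepSide (u v x y : RInf) : Prop :=
  y ∈ ({u, v}ᶜ : Set RInf) ∧ x ∉ connectedComponentIn ({u, v}ᶜ : Set RInf) y

noncomputable def Tq (q : ℕ) (b : ℤ) : RInf → RInf := fun z =>
  match z with
  | Option.none => ((b * lamq q : ℝ) : RInf)
  | Option.some x => if x = 0 then (∞ : RInf) else ((b * lamq q - x⁻¹ : ℝ) : RInf)

noncomputable def RosenValue (q : ℕ) (bs : List ℤ) : RInf := bs.foldr (Tq q) ∞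

def IsGeodesicRosen (q : ℕ) (bs : List ℤ) : Prop :=
  bs ≠ [] ∧ RosenValue q bs ≠ ∞ ∧
  ∀ cs : List ℤ, cs ≠ [] → RosenValue q cs = RosenValue q bs → bs.length ≤ cs.length

def IsPathFrom (q : ℕ) (p : List RInf) (x y : RInf) : Prop :=
  p.Chain' (FareyAdj q) ∧ p.head? = Option.some x ∧ p.getLast? = Option.some y

def IsGeodesicPath (q : ℕ) (p : List RInf) (x y : RInf) : Prop :=
  IsPathFrom q p x y ∧ ∀ p' : List RInf, IsPathFrom q p' x y → p.length ≤ p'.length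

/-- `{u, v}` is a pair of `y`-parents of `x`. -/
def IsParentPair (q : ℕ) (y x u v : RInf) : Prop :=
  ∃ g ∈ Gq q, ∃ i : ℤ,
    g ((rhoP q ^ i) ∞) = x ∧
    ({u, v} : Set RInf) = {g ((rhoP q ^ (i-1)) ∞), g ((rhoP q ^ (i+1)) ∞)} ∧
    SepSide u v x y

/-- `P 0, …, P (n-1)` is the q-chain from `x` to `y`. -/
def IsQChain (q : ℕ) (x y : RInf) (n : ℕ) (P : ℕ → Set RInf) : Prop :=
  1 ≤ n ∧ (∀ j < n, IsFace q (P j)) ∧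
  (∃ g ∈ Gq q, ∃ i : ℤ,
      g ((rhoP q ^ i) ∞) = x ∧ P 0 = ⇑g '' V0 q ∧
      SepSide (g ((rhoP q ^ (i-1)) ∞)) (g ((rhoP q ^ (i+1)) ∞)) x y) ∧
  y ∈ P (n-1) ∧ (∀ j, j < n - 1 → y ∉ P j) ∧
  (∀ j, j + 1 < n → ∃ a b : RInf, FareyAdj q a b ∧ a ∈ P j ∧ b ∈ P j ∧
      (y ∈ ({a, b}ᶜ : Set RInf) ∧
        ∀ w ∈ P j, w ∉ connectedComponentIn ({a, b}ᶜ : Set RInf) y) ∧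
      P (j+1) ≠ P j ∧ a ∈ P (j+1) ∧ b ∈ P (j+1))

/-- Fibonacci numbers with `F 0 = 1`, `F 1 = 2`. -/
def fibF : ℕ → ℕ
  | 0 => 1
  | 1 => 2
  | (n+2) => fibF (n+1) + fibF n



-- ===== auxiliary development =====

noncomputable def sSeq (q : ℕ) : ℕ → ℝ
  | 0 => 0
  | 1 => 1
  | (n+2) => lamq q * sSeq q (n+1) - sSeq q n

lemma theta_pos {q : ℕ} (hq : 3 ≤ q) : 0 < Real.pi / q := by
  have : (0:ℝ) < q := by positivity
  exact div_pos Real.pi_pos this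

lemma theta_lt_pi {q : ℕ} (hq : 3 ≤ q) : Real.pi / q < Real.pi := by
  have h1 : (1:ℝ) < q := by exact_mod_cast Nat.lt_of_lt_of_le (by norm_num) hq
  calc Real.pi / q < Real.pi / 1 := by
        apply div_lt_div_of_pos_left Real.pi_pos (by norm_num) h1
    _ = Real.pi := by ring

lemma sin_theta_pos {q : ℕ} (hq : 3 ≤ q) : 0 < Real.sin (Real.pi / q) :=
  Real.sin_pos_of_pos_of_lt_pi (theta_pos hq) (theta_lt_pi hq)

lemma sSeq_sin {q : ℕ} (hq : 3 ≤ q) :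
    ∀ n, sSeq q n * Real.sin (Real.pi / q) = Real.sin (n * (Real.pi / q)) := by
  set t := Real.pi / q with ht
  have key : ∀ n, sSeq q n * Real.sin t = Real.sin (n * t) ∧
      sSeq q (n+1) * Real.sin t = Real.sin (((n:ℝ)+1) * t) := by
    intro n
    induction n with
    | zero => constructor <;> simp [sSeq]
    | succ m ih =>
      have h1 := ih.1
      have h2 := ih.2
      constructor
      · push_cast
        exact h2
      · have hs : sSeq q (m+1+1) = lamq q * sSeq q (m+1) - sSeq q m := rfl
        have e1 : (((m+1:ℕ):ℝ)+1) * t = ((m:ℝ)+1) * t + t := by push_cast; ring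
        have e2 : (m:ℝ) * t = ((m:ℝ)+1) * t - t := by ring
        rw [hs, e1, Real.sin_add]
        rw [e2, Real.sin_sub] at h1
        have hl : lamq q = 2 * Real.cos t := rfl
        linear_combination (2*Real.cos t)*h2 - h1 + (sSeq q (m+1) * Real.sin t)*hl
  intro n
  have := (key n).1
  exact this

lemma sSeq_nonneg {q : ℕ} (hq : 3 ≤ q) {k : ℕ} (hk : k ≤ q) : 0 ≤ sSeq q k := by
  have h := sSeq_sin hq k
  have hsin : 0 ≤ Real.sin (k * (Real.pi / q)) := by
    apply Real.sin_nonneg_of_nonneg_of_le_pi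
    · positivity
    · have hq0 : (q:ℝ) ≠ 0 := by positivity
      calc (k:ℝ) * (Real.pi / q) ≤ q * (Real.pi / q) := by
            apply mul_le_mul_of_nonneg_right (by exact_mod_cast hk) (le_of_lt (theta_pos hq))
        _ = Real.pi := by field_simp
  nlinarith [sin_theta_pos hq, h]

lemma sSeq_pos {q : ℕ} (hq : 3 ≤ q) {k : ℕ} (h1 : 1 ≤ k) (hk : k ≤ q - 1) : 0 < sSeq q k := by
  have hkq : (k:ℝ) < q := by
    have : k < q := lt_of_le_of_lt hk (by omega)
    exact_mod_cast this
  have h := sSeq_sin hq k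
  have hsin : 0 < Real.sin (k * (Real.pi / q)) := by
    apply Real.sin_pos_of_pos_of_lt_pi
    · have := theta_pos hq
      have : (0:ℝ) < k := by exact_mod_cast h1
      positivity
    · have hq0 : (0:ℝ) < q := by positivity
      rw [div_eq_mul_inv]
      calc (k:ℝ) * (Real.pi * (q:ℝ)⁻¹) < q * (Real.pi * (q:ℝ)⁻¹) := by
            apply mul_lt_mul_of_pos_right hkq
            positivity
        _ = Real.pi := by field_simp
  nlinarith [sin_theta_pos hq, h]

lemma sSeq_q {q : ℕ} (hq : 3 ≤ q) : sSeq q q = 0 := by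
  have h := sSeq_sin hq q
  have hq0 : (q:ℝ) ≠ 0 := by positivity
  have : (q:ℝ) * (Real.pi / q) = Real.pi := by field_simp
  rw [this, Real.sin_pi] at h
  have := sin_theta_pos hq
  nlinarith

lemma sSeq_qsub1 {q : ℕ} (hq : 3 ≤ q) : sSeq q (q-1) = 1 := by
  have h := sSeq_sin hq (q-1)
  have hq0 : (q:ℝ) ≠ 0 := by positivity
  have hc : ((q-1 : ℕ):ℝ) = (q:ℝ) - 1 := by
    have : 1 ≤ q := by omega
    push_cast [this]; ring
  have : ((q-1:ℕ):ℝ) * (Real.pi / q) = Real.pi - Real.pi / q := by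
    rw [hc]; field_simp
  rw [this, Real.sin_pi_sub] at h
  have := sin_theta_pos hq
  nlinarith

lemma sSeq_qadd1 {q : ℕ} (hq : 3 ≤ q) : sSeq q (q+1) = -1 := by
  have h := sSeq_sin hq (q+1)
  have hq0 : (q:ℝ) ≠ 0 := by positivity
  have : ((q+1:ℕ):ℝ) * (Real.pi / q) = Real.pi + Real.pi / q := by
    push_cast; field_simp
  rw [this, Real.sin_add, Real.sin_pi, Real.cos_pi] at h
  have := sin_theta_pos hq
  nlinarith

lemma sSeq_det (q : ℕ) : ∀ k, sSeq q (k+1) ^ 2 - sSeq q (k+2) * sSeq q k = 1 := by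
  intro k
  induction k with
  | zero => simp [sSeq]
  | succ m ih =>
    have hs : sSeq q (m+3) = lamq q * sSeq q (m+2) - sSeq q (m+1) := rfl
    have hs2 : sSeq q (m+2) = lamq q * sSeq q (m+1) - sSeq q m := rfl
    show sSeq q (m+2) ^ 2 - sSeq q (m+3) * sSeq q (m+1) = 1
    linear_combination ih + sSeq q (m+2) * hs2 - sSeq q (m+1) * hs

-- PART II : Moebius formulas
noncomputable def mobm (a b c d : ℝ) : RInf → RInf := fun z =>
  match z with
  | Option.none => if c = 0 then (∞ : RInf) else ((a/c : ℝ) : RInf)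
  | Option.some x => if c*x + d = 0 then (∞ : RInf) else (((a*x+b)/(c*x+d) : ℝ) : RInf)

lemma sigmaP_infty : sigmaP ∞ = ((0:ℝ) : RInf) := rfl

lemma sigmaP_coe (x : ℝ) : sigmaP ((x:ℝ) : RInf)
    = if x = 0 then (∞ : RInf) else ((-x⁻¹ : ℝ) : RInf) := rfl

lemma tauP_infty (q : ℕ) : tauP q ∞ = ∞ := rfl

lemma tauP_coe (q : ℕ) (x : ℝ) : tauP q ((x:ℝ) : RInf) = ((x + lamq q : ℝ) : RInf) := rfl

lemma rho_apply (q : ℕ) (z : RInf) : rhoP q z = mobm (lamq q) (-1) 1 0 z := by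
  cases z with
  | none =>
    show tauP q (sigmaP ∞) = _
    rw [sigmaP_infty, tauP_coe]
    simp [mobm]
  | some x =>
    show tauP q (sigmaP (x : RInf)) = _
    rw [sigmaP_coe]
    by_cases h : x = 0
    · simp [h, mobm, tauP_infty]
    · rw [if_neg h, tauP_coe]
      have : (1:ℝ)*x + 0 ≠ 0 := by simpa using h
      simp only [mobm, this, if_false]
      congr 1
      rw [one_mul, add_zero, eq_div_iff h, add_mul, neg_mul, inv_mul_cancel₀ h]
      ring

lemma mobm_infty (a b c d : ℝ) :
    mobm a b c d ∞ = if c = 0 then (∞:RInf) else ((a/c : ℝ) : RInf) := rfl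

lemma mobm_coe (a b c d x : ℝ) :
    mobm a b c d ((x:ℝ):RInf)
      = if c*x + d = 0 then (∞:RInf) else (((a*x+b)/(c*x+d) : ℝ) : RInf) := rfl

lemma rho_infty (q : ℕ) : rhoP q ∞ = ((lamq q : ℝ) : RInf) := by
  rw [rho_apply, mobm_infty, if_neg (by norm_num : (1:ℝ) ≠ 0)]
  norm_num

lemma rho_coe (q : ℕ) (x : ℝ) :
    rhoP q ((x:ℝ):RInf)
      = if x = 0 then (∞:RInf) else (((lamq q * x - 1)/x : ℝ) : RInf) := by
  rw [rho_apply, mobm_coe]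
  simp only [one_mul, add_zero]
  by_cases h : x = 0
  · rw [if_pos h, if_pos h]
  · rw [if_neg h, if_neg h]
    have e : (lamq q * x + -1)/x = (lamq q * x - 1)/x := by ring
    rw [e]

lemma rho_mob (q : ℕ) (a b c d : ℝ) (hdet : a*d - b*c = 1) (z : RInf) :
    rhoP q (mobm a b c d z) = mobm (lamq q * a - c) (lamq q * b - d) a b z := by
  set L := lamq q with hL
  cases z with
  | none =>
    show rhoP q (mobm a b c d ∞) = mobm (L*a-c) (L*b-d) a b ∞
    rw [mobm_infty, mobm_infty]
    by_cases hc : c = 0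
    · have ha : a ≠ 0 := by
        intro h0; rw [h0, hc] at hdet; simp at hdet
      rw [if_pos hc, if_neg ha, rho_infty, hc]
      norm_cast
      field_simp
      rw [hL]; ring
    · rw [if_neg hc, rho_coe]
      by_cases ha : a = 0
      · rw [if_pos (by simp [ha]), if_pos ha]
      · rw [if_neg (by simp [div_eq_zero_iff, hc, ha]), if_neg ha]
        norm_cast
        field_simp
        rw [hL]; ring
  | some x =>
    show rhoP q (mobm a b c d ((x:ℝ):RInf)) = mobm (L*a-c) (L*b-d) a b ((x:ℝ):RInf)
    rw [mobm_coe, mobm_coe]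
    by_cases hv : c*x + d = 0
    · have hc : c ≠ 0 := by
        intro h0
        rw [h0] at hv; simp at hv
        rw [h0, hv] at hdet; simp at hdet
      have hab : a*x + b ≠ 0 := by
        intro h0
        have h2 : a*(c*x+d) - c*(a*x+b) = 1 := by linear_combination hdet
        rw [hv, h0] at h2; simp at h2
      rw [if_pos hv, if_neg hab, rho_infty]
      norm_cast
      rw [eq_div_iff hab]
      linear_combination hv
    · rw [if_neg hv, rho_coe]
      by_cases hab : a*x + b = 0
      · rw [if_pos (by simp [hab]), if_pos hab]
      · rw [if_neg (by simp [div_eq_zero_iff, hv, hab]), if_neg hab]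
        congr 1
        rw [hL]
        have hv' : c*x + d ≠ 0 := hv
        have hab' : a*x + b ≠ 0 := hab
        rw [div_eq_div_iff (div_ne_zero hab' hv') hab', div_eq_mul_inv (a*x+b) (c*x+d)]
        linear_combination (a*x+b) * (mul_inv_cancel₀ hv')

lemma rho_pow (q : ℕ) (k : ℕ) (z : RInf) :
    ((rhoP q)^(k+1)) z
      = mobm (sSeq q (k+2)) (-(sSeq q (k+1))) (sSeq q (k+1)) (-(sSeq q k)) z := by
  induction k generalizing z with
  | zero =>
    have h2 : sSeq q 2 = lamq q := by
      show lamq q * sSeq q 1 - sSeq q 0 = lamq q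
      simp [sSeq]
    have h1 : sSeq q 1 = 1 := rfl
    have h0 : sSeq q 0 = 0 := rfl
    rw [pow_one, h2, h1, h0, neg_zero, rho_apply]
  | succ m ih =>
    have hpow : (rhoP q)^(m+1+1) = rhoP q * (rhoP q)^(m+1) := by
      rw [← pow_succ']
    rw [hpow, Equiv.Perm.mul_apply, ih]
    have hdet : sSeq q (m+2) * (-(sSeq q m)) - (-(sSeq q (m+1))) * sSeq q (m+1) = 1 := by
      have h := sSeq_det q m
      linear_combination h
    rw [rho_mob q _ _ _ _ hdet]
    have e1 : lamq q * sSeq q (m+2) - sSeq q (m+1) = sSeq q (m+3) := rfl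
    have e2 : lamq q * (-(sSeq q (m+1))) - (-(sSeq q m)) = -(sSeq q (m+2)) := by
      have : sSeq q (m+2) = lamq q * sSeq q (m+1) - sSeq q m := rfl
      linear_combination this
    rw [e1, e2]

lemma rho_pow_q {q : ℕ} (hq : 3 ≤ q) : (rhoP q)^q = 1 := by
  ext z
  have hk : q - 1 + 1 = q := by omega
  have h := rho_pow q (q-1) z
  rw [hk] at h
  have e1 : q - 1 + 2 = q + 1 := by omega
  rw [e1] at h
  rw [sSeq_qadd1 hq, sSeq_q hq, sSeq_qsub1 hq] at h
  rw [h]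
  cases z with
  | none =>
    show mobm (-1) (-0) 0 (-1) ∞ = ∞
    rw [mobm_infty, if_pos rfl]
  | some x =>
    show mobm (-1) (-0) 0 (-1) ((x:ℝ):RInf) = ((x:ℝ):RInf)
    rw [mobm_coe, if_neg (by norm_num)]
    congr 1
    field_simp
    ring

-- Arcs
def Xc : Set RInf := insert ∞ ((fun x : ℝ => ((x:ℝ):RInf)) '' Set.Iic 0)

def Yc : Set RInf := insert ∞ ((fun x : ℝ => ((x:ℝ):RInf)) '' Set.Ici 0)

lemma infty_mem_Xc : (∞:RInf) ∈ Xc := Set.mem_insert _ _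
lemma infty_mem_Yc : (∞:RInf) ∈ Yc := Set.mem_insert _ _
lemma zero_mem_Xc : (((0:ℝ)):RInf) ∈ Xc := Set.mem_insert_of_mem _ ⟨0, Set.mem_Iic.mpr (le_refl 0), rfl⟩
lemma zero_mem_Yc : (((0:ℝ)):RInf) ∈ Yc := Set.mem_insert_of_mem _ ⟨0, Set.mem_Ici.mpr (le_refl 0), rfl⟩

lemma coe_mem_Xc {x : ℝ} : ((x:ℝ):RInf) ∈ Xc ↔ x ≤ 0 := by
  constructor
  · rintro (h | ⟨y, hy, hyx⟩)
    · exact absurd h (OnePoint.coe_ne_infty x)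
    · rw [OnePoint.coe_eq_coe] at hyx; exact hyx ▸ hy
  · intro h; exact Set.mem_insert_of_mem _ ⟨x, h, rfl⟩

lemma coe_mem_Yc {x : ℝ} : ((x:ℝ):RInf) ∈ Yc ↔ 0 ≤ x := by
  constructor
  · rintro (h | ⟨y, hy, hyx⟩)
    · exact absurd h (OnePoint.coe_ne_infty x)
    · rw [OnePoint.coe_eq_coe] at hyx; exact hyx ▸ hy
  · intro h; exact Set.mem_insert_of_mem _ ⟨x, h, rfl⟩

lemma Xc_inter_Yc {z : RInf} (hx : z ∈ Xc) (hy : z ∈ Yc) :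
    z = ∞ ∨ z = ((0:ℝ):RInf) := by
  cases z with
  | none => exact Or.inl rfl
  | some x =>
    right
    have h1 : x ≤ 0 := coe_mem_Xc.mp hx
    have h2 : 0 ≤ x := coe_mem_Yc.mp hy
    show ((x:ℝ):RInf) = ((0:ℝ):RInf)
    rw [OnePoint.coe_eq_coe]
    linarith

-- F1
lemma sigma_Yc_mem {z : RInf} (hz : z ∈ Yc) : sigmaP z ∈ Xc := by
  cases z with
  | none =>
    show sigmaP ∞ ∈ Xc
    rw [sigmaP_infty]; exact zero_mem_Xc
  | some x =>
    show sigmaP ((x:ℝ):RInf) ∈ Xc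
    rw [sigmaP_coe]
    by_cases h : x = 0
    · rw [if_pos h]; exact infty_mem_Xc
    · rw [if_neg h]
      have hx : 0 ≤ x := coe_mem_Yc.mp hz
      have hx' : 0 < x := lt_of_le_of_ne hx (Ne.symm h)
      rw [coe_mem_Xc]
      have : 0 < x⁻¹ := inv_pos.mpr hx'
      linarith

-- F2
lemma rho_pow_Xc_mem {q : ℕ} (hq : 3 ≤ q) {k : ℕ} (h1 : 1 ≤ k) (h2 : k ≤ q - 1)
    {z : RInf} (hz : z ∈ Xc) : ((rhoP q)^k) z ∈ Yc := by
  obtain ⟨m, rfl⟩ : ∃ m, k = m + 1 := ⟨k - 1, by omega⟩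
  have hs1 : 0 < sSeq q (m+1) := sSeq_pos hq (by omega) (by omega)
  have hs2 : 0 ≤ sSeq q (m+2) := sSeq_nonneg hq (by omega)
  have hs0 : 0 ≤ sSeq q m := sSeq_nonneg hq (by omega)
  rw [rho_pow]
  cases z with
  | none =>
    show mobm (sSeq q (m+2)) (-(sSeq q (m+1))) (sSeq q (m+1)) (-(sSeq q m)) ∞ ∈ Yc
    rw [mobm_infty, if_neg (ne_of_gt hs1)]
    rw [coe_mem_Yc]
    positivity
  | some x =>
    have hx : x ≤ 0 := coe_mem_Xc.mp hz
    show mobm (sSeq q (m+2)) (-(sSeq q (m+1))) (sSeq q (m+1)) (-(sSeq q m)) ((x:ℝ):RInf) ∈ Yc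
    rw [mobm_coe]
    by_cases hden : sSeq q (m+1) * x + -(sSeq q m) = 0
    · rw [if_pos hden]; exact infty_mem_Yc
    · rw [if_neg hden]
      rw [coe_mem_Yc]
      have hnum : sSeq q (m+2) * x + -(sSeq q (m+1)) < 0 := by nlinarith
      have hden' : sSeq q (m+1) * x + -(sSeq q m) < 0 := by
        rcases lt_or_eq_of_le (by nlinarith : sSeq q (m+1) * x + -(sSeq q m) ≤ 0) with h | h
        · exact h
        · exact absurd h hden
      exact le_of_lt (div_pos_of_neg_of_neg hnum hden')

lemma rho_pow_infty_mem_Yc {q : ℕ} (hq : 3 ≤ q) {m : ℕ} (hm : m < q) :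
    ((rhoP q)^m) ∞ ∈ Yc := by
  cases m with
  | zero => exact infty_mem_Yc
  | succ k =>
    have hs1 : 0 < sSeq q (k+1) := sSeq_pos hq (by omega) (by omega)
    have hs2 : 0 ≤ sSeq q (k+2) := sSeq_nonneg hq (by omega)
    rw [rho_pow]
    show mobm (sSeq q (k+2)) (-(sSeq q (k+1))) (sSeq q (k+1)) (-(sSeq q k)) ∞ ∈ Yc
    rw [mobm_infty, if_neg (ne_of_gt hs1), coe_mem_Yc]
    positivity

lemma sigmaP_mul_self : sigmaP * sigmaP = 1 := by
  ext z
  exact sigmaFun_invol z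

lemma rho_mul_sigma (q : ℕ) : rhoP q * sigmaP = tauP q := by
  show tauP q * sigmaP * sigmaP = tauP q
  rw [mul_assoc, sigmaP_mul_self, mul_one]

lemma sigmaP_inv : sigmaP⁻¹ = sigmaP := by
  rw [inv_eq_iff_mul_eq_one, sigmaP_mul_self]

lemma rho_inv {q : ℕ} (hq : 3 ≤ q) : (rhoP q)⁻¹ = (rhoP q)^(q-1) := by
  rw [inv_eq_iff_mul_eq_one]
  have : rhoP q * (rhoP q)^(q-1) = (rhoP q)^q := by
    rw [← pow_succ']
    congr 1
    omega
  rw [this, rho_pow_q hq]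

/-- The submonoid generated by sigma and rho. -/
noncomputable def Mq (q : ℕ) : Submonoid (Equiv.Perm RInf) :=
  Submonoid.closure {sigmaP, rhoP q}

lemma sigma_mem_Mq (q : ℕ) : sigmaP ∈ Mq q :=
  Submonoid.subset_closure (Set.mem_insert _ _)

lemma rho_mem_Mq (q : ℕ) : rhoP q ∈ Mq q :=
  Submonoid.subset_closure (Set.mem_insert_of_mem _ rfl)

lemma Gq_le_Mq {q : ℕ} (hq : 3 ≤ q) {h : Equiv.Perm RInf} (hh : h ∈ Gq q) : h ∈ Mq q := by
  let S : Subgroup (Equiv.Perm RInf) :=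
    { carrier := {g | g ∈ Mq q ∧ g⁻¹ ∈ Mq q}
      one_mem' := ⟨one_mem _, by rw [inv_one]; exact one_mem _⟩
      mul_mem' := fun ha hb => ⟨mul_mem ha.1 hb.1, by
        rw [mul_inv_rev]; exact mul_mem hb.2 ha.2⟩
      inv_mem' := fun ha => ⟨ha.2, by rw [inv_inv]; exact ha.1⟩ }
  have hle : Gq q ≤ S := by
    rw [Gq, Subgroup.closure_le]
    rintro g (rfl | rfl)
    · exact ⟨sigma_mem_Mq q, by rw [sigmaP_inv]; exact sigma_mem_Mq q⟩
    · refine ⟨?_, ?_⟩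
      · rw [← rho_mul_sigma q]
        exact mul_mem (rho_mem_Mq q) (sigma_mem_Mq q)
      · rw [← rho_mul_sigma q, mul_inv_rev, sigmaP_inv, rho_inv hq]
        exact mul_mem (sigma_mem_Mq q) (pow_mem (rho_mem_Mq q) _)
  exact (hle hh).1

/-- Alternating words. -/
noncomputable def Wl (q : ℕ) (ks : List ℕ) : Equiv.Perm RInf :=
  (ks.map (fun k => rhoP q ^ k * sigmaP)).prod

lemma Wl_nil (q : ℕ) : Wl q [] = 1 := rfl

lemma Wl_cons (q : ℕ) (k : ℕ) (ks : List ℕ) :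
    Wl q (k :: ks) = rhoP q ^ k * sigmaP * Wl q ks := by
  show (List.map _ (k :: ks)).prod = _
  rw [List.map_cons, List.prod_cons]
  rfl

def GoodL (q : ℕ) (ks : List ℕ) : Prop :=
  (∀ k ∈ ks, k < q) ∧ (∀ k ∈ ks.tail, 1 ≤ k)

noncomputable def sp : Bool → Equiv.Perm RInf := fun b => if b then sigmaP else 1

lemma prep_sigma {q : ℕ} (hq : 3 ≤ q) (ks : List ℕ) (b : Bool) (hks : GoodL q ks) :
    ∃ ks' b', GoodL q ks' ∧ sigmaP * (Wl q ks * sp b) = Wl q ks' * sp b' := by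
  cases ks with
  | nil =>
    cases b with
    | false =>
      exact ⟨[], true, ⟨by simp, by simp⟩, by simp [Wl_nil, sp]⟩
    | true =>
      refine ⟨[], false, ⟨by simp, by simp⟩, ?_⟩
      simp only [Wl_nil, sp, if_pos, one_mul, mul_one, if_neg]
      rw [sigmaP_mul_self]
      simp
  | cons k tl =>
    rcases Nat.eq_zero_or_pos k with rfl | hk
    · refine ⟨tl, b, ⟨fun m hm => hks.1 m (List.mem_cons_of_mem _ hm),
        fun m hm => hks.2 m (List.mem_of_mem_tail hm)⟩, ?_⟩
      rw [Wl_cons, pow_zero, one_mul, ← mul_assoc, ← mul_assoc, sigmaP_mul_self, one_mul]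
    · refine ⟨0 :: k :: tl, b, ⟨?_, ?_⟩, ?_⟩
      · intro m hm
        rcases List.mem_cons.mp hm with rfl | hm'
        · omega
        · exact hks.1 m hm'
      · intro m hm
        rcases List.mem_cons.mp hm with rfl | hm'
        · exact hk
        · exact hks.2 m hm'
      · simp only [Wl_cons, pow_zero, one_mul, mul_assoc]

lemma prep_rho {q : ℕ} (hq : 3 ≤ q) (ks : List ℕ) (b : Bool) (hks : GoodL q ks) :
    ∃ ks' b', GoodL q ks' ∧ rhoP q * (Wl q ks * sp b) = Wl q ks' * sp b' := by
  cases ks with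
  | nil =>
    cases b with
    | false =>
      refine ⟨[1], true, ⟨by intro k hk; simp at hk; omega, by simp⟩, ?_⟩
      simp only [Wl_cons, Wl_nil, sp, if_pos, mul_one, pow_one]
      simp [mul_assoc, sigmaP_mul_self]
    | true =>
      refine ⟨[1], false, ⟨by intro k hk; simp at hk; omega, by simp⟩, ?_⟩
      simp only [Wl_cons, Wl_nil, sp, mul_one, pow_one]
      simp
  | cons k tl =>
    by_cases hk : k + 1 < q
    · refine ⟨(k+1) :: tl, b, ⟨?_, ?_⟩, ?_⟩
      · intro m hm
        rcases List.mem_cons.mp hm with rfl | hm'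
        · exact hk
        · exact hks.1 m (List.mem_cons_of_mem _ hm')
      · exact fun m hm => hks.2 m hm
      · simp only [Wl_cons, ← mul_assoc]
        rw [← pow_succ']
    · -- k + 1 = q, so rho^(k+1) = 1
      have hkq : k + 1 = q := by
        have := hks.1 k (List.mem_cons_self)
        omega
      have hcancel : rhoP q * (Wl q (k :: tl) * sp b) = sigmaP * (Wl q tl * sp b) := by
        simp only [Wl_cons, ← mul_assoc]
        have : rhoP q * rhoP q ^ k = 1 := by
          rw [← pow_succ', hkq, rho_pow_q hq]
        rw [this, one_mul]
      rw [hcancel]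
      exact prep_sigma hq tl b ⟨fun m hm => hks.1 m (List.mem_cons_of_mem _ hm),
        fun m hm => hks.2 m (List.mem_of_mem_tail hm)⟩

lemma exists_alt_form {q : ℕ} (hq : 3 ≤ q) (l : List (Equiv.Perm RInf))
    (hl : ∀ x ∈ l, x = sigmaP ∨ x = rhoP q) :
    ∃ ks b, GoodL q ks ∧ l.prod = Wl q ks * sp b := by
  induction l with
  | nil =>
    exact ⟨[], false, ⟨by simp, by simp⟩, by simp [Wl_nil, sp]⟩
  | cons g l ih =>
    obtain ⟨ks, b, hks, hprod⟩ := ih (fun x hx => hl x (List.mem_cons_of_mem _ hx))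
    rw [List.prod_cons, hprod]
    rcases hl g (List.mem_cons_self) with rfl | rfl
    · exact prep_sigma hq ks b hks
    · exact prep_rho hq ks b hks

lemma arc_lemma {q : ℕ} (hq : 3 ≤ q) :
    ∀ (tl : List ℕ) (k : ℕ), GoodL q (k :: tl) →
      ∀ z ∈ Yc, (Wl q (k :: tl)) z ∈ ⇑(rhoP q ^ k) '' Xc := by
  intro tl
  induction tl with
  | nil =>
    intro k _ z hz
    rw [Wl_cons, Wl_nil, mul_one, Equiv.Perm.mul_apply]
    exact ⟨sigmaP z, sigma_Yc_mem hz, rfl⟩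
  | cons k' tl' ih =>
    intro k hks z hz
    have hgood' : GoodL q (k' :: tl') := by
      refine ⟨fun m hm => hks.1 m (List.mem_cons_of_mem _ hm), fun m hm => ?_⟩
      exact hks.2 m (List.mem_cons_of_mem _ (by exact hm))
    obtain ⟨x, hx, hxe⟩ := ih k' hgood' z hz
    have hk'1 : 1 ≤ k' := hks.2 k' (List.mem_cons_self)
    have hk'q : k' < q := hks.1 k' (List.mem_cons_of_mem _ (List.mem_cons_self))
    have hY : (Wl q (k' :: tl')) z ∈ Yc := by
      rw [← hxe]
      exact rho_pow_Xc_mem hq hk'1 (by omega) hx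
    rw [Wl_cons, Equiv.Perm.mul_apply, Equiv.Perm.mul_apply]
    exact ⟨sigmaP ((Wl q (k' :: tl')) z), sigma_Yc_mem hY, rfl⟩

lemma lemmaM {q : ℕ} (hq : 3 ≤ q) {h : Equiv.Perm RInf} (hh : h ∈ Gq q) :
    ∃ j, j < q ∧ h ((0:ℝ):RInf) ∈ ⇑(rhoP q ^ j) '' Xc ∧ h ∞ ∈ ⇑(rhoP q ^ j) '' Xc := by
  obtain ⟨l, hl, hprod⟩ := Submonoid.exists_list_of_mem_closure (Gq_le_Mq hq hh)
  obtain ⟨ks, b, hks, hform⟩ := exists_alt_form hq l hl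
  rw [hprod] at hform
  have key : ∀ z : RInf, (z = ((0:ℝ):RInf) ∨ z = ∞) →
      h z ∈ ⇑(rhoP q ^ (ks.headI)) '' Xc := by
    intro z hz
    have hb : (sp b) z = ((0:ℝ):RInf) ∨ (sp b) z = ∞ := by
      cases b with
      | false =>
        simpa [sp] using hz
      | true =>
        show sigmaP z = _ ∨ sigmaP z = _
        rcases hz with rfl | rfl
        · right
          rw [sigmaP_coe, if_pos rfl]
        · left
          exact sigmaP_infty
    have hbY : (sp b) z ∈ Yc := by
      rcases hb with hb | hb <;> rw [hb]
      · exact zero_mem_Yc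
      · exact infty_mem_Yc
    have happ : h z = (Wl q ks) ((sp b) z) := by
      rw [hform, Equiv.Perm.mul_apply]
    cases ks with
    | nil =>
      rw [happ, Wl_nil]
      have hXc : (sp b) z ∈ Xc := by
        rcases hb with hb | hb <;> rw [hb]
        · exact zero_mem_Xc
        · exact infty_mem_Xc
      refine ⟨(sp b) z, hXc, ?_⟩
      simp
    | cons k tl =>
      rw [happ]
      exact arc_lemma hq tl k hks _ hbY
  refine ⟨ks.headI, ?_, key _ (Or.inl rfl), key _ (Or.inr rfl)⟩
  cases ks with
  | nil => simpa using (by omega : 0 < q)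
  | cons k tl => exact hks.1 k (List.mem_cons_self)

open Topology Filter Set

-- PART IV : continuity
lemma tendsto_neg_Iio_Ioi :
    Filter.Tendsto (fun x : ℝ => -x) (𝓝[Set.Iio 0] (0:ℝ)) (𝓝[Set.Ioi 0] (0:ℝ)) := by
  show Filter.Tendsto _ (𝓝 (0:ℝ) ⊓ Filter.principal (Set.Iio 0))
    (𝓝 (0:ℝ) ⊓ Filter.principal (Set.Ioi 0))
  apply Filter.Tendsto.inf
  · simpa using (continuous_neg : Continuous (fun x:ℝ => -x)).tendsto (0:ℝ)
  · rw [Filter.tendsto_principal_principal]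
    intro x hx
    simpa using hx

lemma tendsto_neg_inv_zero_cocompact :
    Filter.Tendsto (fun x : ℝ => -x⁻¹) (𝓝[≠] (0:ℝ)) (Filter.cocompact ℝ) := by
  rw [cocompact_eq_atBot_atTop]
  have hsplit : ({(0:ℝ)}ᶜ : Set ℝ) = Set.Iio 0 ∪ Set.Ioi 0 := Set.Iio_union_Ioi.symm
  have heq : (𝓝[≠] (0:ℝ)) = 𝓝[Set.Iio 0] 0 ⊔ 𝓝[Set.Ioi 0] 0 := by
    rw [← nhdsWithin_union]; rw [hsplit]
  rw [heq, Filter.tendsto_sup]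
  constructor
  · -- x → 0⁻ : -x⁻¹ → atTop
    apply Filter.Tendsto.mono_right _ le_sup_right
    have h1 := (tendsto_inv_nhdsGT_zero (𝕜 := ℝ)).comp tendsto_neg_Iio_Ioi
    have : (fun x : ℝ => -x⁻¹) = (fun x : ℝ => x⁻¹) ∘ (fun x : ℝ => -x) := by
      funext x; simp [inv_neg]
    rw [this]
    exact h1
  · -- x → 0⁺ : -x⁻¹ → atBot
    apply Filter.Tendsto.mono_right _ le_sup_left
    exact (tendsto_neg_atTop_atBot).comp (tendsto_inv_nhdsGT_zero (𝕜 := ℝ))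

lemma tendsto_neg_inv_cocompact_zero :
    Filter.Tendsto (fun x : ℝ => -x⁻¹) (Filter.cocompact ℝ) (𝓝 (0:ℝ)) := by
  rw [cocompact_eq_atBot_atTop]
  rw [Filter.tendsto_sup]
  constructor
  · have h := (tendsto_inv_atTop_zero (𝕜 := ℝ)).comp tendsto_neg_atBot_atTop
    have h2 : Filter.Tendsto (fun x : ℝ => -x⁻¹) Filter.atBot (𝓝 0) := by
      refine h.congr ?_
      intro x
      show (-x)⁻¹ = -x⁻¹
      rw [inv_neg]
    exact h2
  · simpa using (tendsto_inv_atTop_zero (𝕜 := ℝ)).neg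

lemma continuous_sigmaP : Continuous ⇑sigmaP := by
  rw [continuous_iff_continuousAt]
  intro z
  cases z with
  | none =>
    show ContinuousAt (⇑sigmaP) ∞
    rw [OnePoint.continuousAt_infty']
    rw [Filter.coclosedCompact_eq_cocompact]
    have hev : ∀ᶠ x : ℝ in Filter.cocompact ℝ, ((↑(-x⁻¹ : ℝ)) : RInf) = (⇑sigmaP ∘ (↑)) x := by
      filter_upwards [(isCompact_singleton (x := (0:ℝ))).compl_mem_cocompact] with x hx
      have hx0 : x ≠ 0 := by simpa using hx
      show ((-x⁻¹ : ℝ) : RInf) = sigmaP ((x:ℝ):RInf)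
      rw [sigmaP_coe, if_neg hx0]
    refine Filter.Tendsto.congr' hev ?_
    rw [sigmaP_infty]
    exact (OnePoint.continuous_coe.tendsto (0:ℝ)).comp tendsto_neg_inv_cocompact_zero
  | some x =>
    rw [show (Option.some x : RInf) = ((x:ℝ):RInf) from rfl]
    rw [OnePoint.continuousAt_coe]
    by_cases hx : x = 0
    · subst hx
      show Filter.Tendsto _ (𝓝 (0:ℝ)) _
      have hval : (⇑sigmaP ∘ (↑)) (0:ℝ) = ∞ := by
        show sigmaP ((0:ℝ):RInf) = ∞
        rw [sigmaP_coe, if_pos rfl]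
      show Filter.Tendsto (⇑sigmaP ∘ (↑)) (𝓝 (0:ℝ)) (𝓝 ((⇑sigmaP ∘ (↑)) (0:ℝ)))
      rw [hval]
      rw [← nhdsNE_sup_pure (0:ℝ), Filter.tendsto_sup]
      constructor
      · have hev : ∀ᶠ y : ℝ in 𝓝[≠] (0:ℝ), ((↑(-y⁻¹ : ℝ)) : RInf) = (⇑sigmaP ∘ (↑)) y := by
          filter_upwards [self_mem_nhdsWithin] with y hy
          have hy0 : y ≠ 0 := by simpa using hy
          show ((-y⁻¹ : ℝ) : RInf) = sigmaP ((y:ℝ):RInf)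
          rw [sigmaP_coe, if_neg hy0]
        refine Filter.Tendsto.congr' hev ?_
        have h2 : Filter.Tendsto ((↑) : ℝ → RInf) (Filter.cocompact ℝ) (𝓝 ∞) := by
          rw [← Filter.coclosedCompact_eq_cocompact]
          exact OnePoint.tendsto_coe_infty
        exact h2.comp tendsto_neg_inv_zero_cocompact
      · rw [Filter.tendsto_pure_left]
        intro s hs
        rw [hval]
        exact mem_of_mem_nhds hs
    · have hval : (⇑sigmaP ∘ (↑)) x = ((-x⁻¹ : ℝ) : RInf) := by
        show sigmaP ((x:ℝ):RInf) = _
        rw [sigmaP_coe, if_neg hx]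
      have hcont : ContinuousAt (fun y : ℝ => ((-y⁻¹ : ℝ) : RInf)) x :=
        (OnePoint.continuous_coe.tendsto _).comp ((continuousAt_inv₀ hx).neg)
      refine ContinuousAt.congr hcont ?_
      have hev : ∀ᶠ y : ℝ in 𝓝 x, y ≠ 0 := eventually_ne_nhds hx
      filter_upwards [hev] with y hy
      show ((-y⁻¹ : ℝ) : RInf) = sigmaP ((y:ℝ):RInf)
      rw [sigmaP_coe, if_neg hy]

noncomputable def addP (c : ℝ) : Equiv.Perm RInf where
  toFun z := match z with
    | Option.none => (∞ : RInf)
    | Option.some x => Option.some (x + c)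
  invFun z := match z with
    | Option.none => (∞ : RInf)
    | Option.some x => Option.some (x - c)
  left_inv z := by cases z <;> simp [OnePoint.infty] <;> rfl
  right_inv z := by cases z <;> simp [OnePoint.infty] <;> rfl

lemma addP_infty (c : ℝ) : addP c ∞ = ∞ := rfl
lemma addP_coe (c x : ℝ) : addP c ((x:ℝ):RInf) = ((x + c : ℝ):RInf) := rfl

lemma tauP_eq_addP (q : ℕ) : tauP q = addP (lamq q) := by
  ext z
  cases z with
  | none => rfl
  | some x => rfl

lemma tauP_inv_eq_addP (q : ℕ) : (tauP q)⁻¹ = addP (-(lamq q)) := by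
  ext z
  cases z with
  | none => rfl
  | some x =>
    show (tauP q).symm (Option.some x) = _
    show Option.some (x - lamq q) = Option.some (x + -(lamq q))
    rw [sub_eq_add_neg]

lemma continuous_addP (c : ℝ) : Continuous ⇑(addP c) := by
  rw [continuous_iff_continuousAt]
  intro z
  cases z with
  | none =>
    show ContinuousAt (⇑(addP c)) ∞
    rw [OnePoint.continuousAt_infty']
    rw [Filter.coclosedCompact_eq_cocompact, addP_infty]
    have h1 : Filter.Tendsto (fun x : ℝ => x + c) (Filter.cocompact ℝ) (Filter.cocompact ℝ) := by
      rw [cocompact_eq_atBot_atTop, Filter.tendsto_sup]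
      constructor
      · exact (tendsto_atBot_add_const_right _ c tendsto_id).mono_right le_sup_left
      · exact (tendsto_atTop_add_const_right _ c tendsto_id).mono_right le_sup_right
    have h2 : Filter.Tendsto ((↑) : ℝ → RInf) (Filter.cocompact ℝ) (𝓝 ∞) := by
      rw [← Filter.coclosedCompact_eq_cocompact]
      exact OnePoint.tendsto_coe_infty
    have := h2.comp h1
    refine this.congr ?_
    intro x
    rfl
  | some x =>
    show ContinuousAt (⇑(addP c)) ((x:ℝ):RInf)
    rw [OnePoint.continuousAt_coe]
    have : (⇑(addP c) ∘ (↑)) = fun y : ℝ => ((y + c : ℝ) : RInf) := by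
      funext y; rfl
    rw [this]
    exact (OnePoint.continuous_coe.comp (by continuity)).continuousAt

lemma continuous_of_mem_Gq {q : ℕ} {g : Equiv.Perm RInf} (hg : g ∈ Gq q) :
    Continuous ⇑g := by
  let S : Subgroup (Equiv.Perm RInf) :=
    { carrier := {g | Continuous ⇑g ∧ Continuous ⇑g⁻¹}
      one_mem' := by
        constructor
        · rw [show ⇑(1 : Equiv.Perm RInf) = id from rfl]; exact continuous_id
        · rw [inv_one]
          rw [show ⇑(1 : Equiv.Perm RInf) = id from rfl]; exact continuous_id
      mul_mem' := by
        intro a b ha hb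
        constructor
        · show Continuous ⇑(a * b)
          rw [Equiv.Perm.coe_mul]
          exact ha.1.comp hb.1
        · show Continuous ⇑(a * b)⁻¹
          rw [mul_inv_rev, Equiv.Perm.coe_mul]
          exact hb.2.comp ha.2
      inv_mem' := by
        intro a ha
        exact ⟨ha.2, by rw [inv_inv]; exact ha.1⟩ }
  have hle : Gq q ≤ S := by
    rw [Gq, Subgroup.closure_le]
    rintro g (rfl | rfl)
    · refine ⟨continuous_sigmaP, ?_⟩
      rw [sigmaP_inv]
      exact continuous_sigmaP
    · refine ⟨?_, ?_⟩
      · rw [tauP_eq_addP]; exact continuous_addP _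
      · rw [tauP_inv_eq_addP]; exact continuous_addP _
  exact (hle hg).1

def Nneg : Set RInf := (fun x : ℝ => ((x:ℝ):RInf)) '' Set.Iio 0

lemma Nneg_preconnected : IsPreconnected Nneg :=
  (isPreconnected_Iio).image _ (OnePoint.continuous_coe.continuousOn)

lemma Nneg_subset_Xc : Nneg ⊆ Xc := by
  rintro z ⟨x, hx, rfl⟩
  rw [coe_mem_Xc]
  exact le_of_lt hx

lemma Xc_subset_closure_Nneg : Xc ⊆ closure Nneg := by
  rintro z (rfl | ⟨x, hx, rfl⟩)
  · -- ∞
    have h2 : Filter.Tendsto ((↑) : ℝ → RInf) Filter.atBot (𝓝 ∞) := by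
      have h3 : Filter.Tendsto ((↑) : ℝ → RInf) (Filter.cocompact ℝ) (𝓝 ∞) := by
        rw [← Filter.coclosedCompact_eq_cocompact]
        exact OnePoint.tendsto_coe_infty
      refine h3.mono_left ?_
      rw [cocompact_eq_atBot_atTop]
      exact le_sup_left
    refine mem_closure_of_tendsto h2 ?_
    filter_upwards [Filter.eventually_lt_atBot (0:ℝ)] with y hy
    exact ⟨y, hy, rfl⟩
  · -- coe x, x ≤ 0
    have : ((x:ℝ):RInf) ∈ (fun y : ℝ => ((y:ℝ):RInf)) '' closure (Set.Iio 0) := by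
      rw [closure_Iio]
      exact ⟨x, hx, rfl⟩
    exact (image_closure_subset_closure_image OnePoint.continuous_coe) this

lemma Xc_diff_preconnected (F : Set RInf)
    (hF : Xc ∩ F ⊆ {(∞:RInf), ((0:ℝ):RInf)}) : IsPreconnected (Xc \ F) := by
  apply Nneg_preconnected.subset_closure
  · rintro z hz
    refine ⟨Nneg_subset_Xc hz, ?_⟩
    intro hzF
    have := hF ⟨Nneg_subset_Xc hz, hzF⟩
    obtain ⟨x, hx, rfl⟩ := hz
    rcases this with h | h
    · exact OnePoint.coe_ne_infty x h
    · rw [Set.mem_singleton_iff, OnePoint.coe_eq_coe] at h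
      exact absurd h (ne_of_lt hx)
  · exact (Set.diff_subset).trans Xc_subset_closure_Nneg

lemma rho_mem_Gq (q : ℕ) : rhoP q ∈ Gq q := by
  have : rhoP q = tauP q * sigmaP := rfl
  rw [this]
  exact mul_mem (Subgroup.subset_closure (Set.mem_insert_of_mem _ rfl))
    (Subgroup.subset_closure (Set.mem_insert _ _))

lemma step_lemma {q : ℕ} (hq : 3 ≤ q) {g : Equiv.Perm RInf} (hg : g ∈ Gq q)
    {ia ib : ℕ} (hia : ia < q) (hib : ib < q) {u v a b : RInf}
    (hu : u = g ((rhoP q ^ ia) ∞)) (hv : v = g ((rhoP q ^ ib) ∞))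
    (hab : FareyAdj q a b)
    (ha : a ∈ ({u, v}ᶜ : Set RInf)) (hb : b ∈ ({u, v}ᶜ : Set RInf)) :
    b ∈ connectedComponentIn ({u, v}ᶜ : Set RInf) a := by
  obtain ⟨-, h, hh, hcase⟩ := hab
  obtain ⟨j, hjq, h0, hinf⟩ := lemmaM hq (mul_mem (inv_mem hg) hh)
  set φ := g * rhoP q ^ j with hφ
  have hφG : φ ∈ Gq q := mul_mem hg (pow_mem (rho_mem_Gq q) j)
  have himg : ∀ w : RInf, (g⁻¹ * h) w ∈ ⇑(rhoP q ^ j) '' Xc → h w ∈ ⇑φ '' Xc := by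
    rintro w ⟨z, hz, hze⟩
    refine ⟨z, hz, ?_⟩
    have : g ((g⁻¹ * h) w) = h w := by
      rw [Equiv.Perm.mul_apply]
      exact g.apply_symm_apply _
    rw [← this, ← hze, hφ, Equiv.Perm.mul_apply]
  have hA : a ∈ ⇑φ '' Xc ∧ b ∈ ⇑φ '' Xc := by
    rcases hcase with ⟨e1, e2⟩ | ⟨e1, e2⟩
    · exact ⟨e1 ▸ himg _ h0, e2 ▸ himg _ hinf⟩
    · exact ⟨e2 ▸ himg _ hinf, e1 ▸ himg _ h0⟩
  set F : Set RInf := ⇑φ ⁻¹' {u, v} with hFdef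
  have hvert : ∀ (i : ℕ), i < q → ∀ z ∈ Xc, φ z = g ((rhoP q ^ i) ∞) →
      z = ∞ ∨ z = ((0:ℝ):RInf) := by
    intro i hi z hzX hze
    set m := (i + q - j) % q with hm
    have hmq : m < q := Nat.mod_lt _ (by omega)
    have hpow : rhoP q ^ (j + m) = rhoP q ^ i := by
      have : j + m = i ∨ j + m = i + q := by
        rcases Nat.lt_or_ge (i + q - j) q with hlt | hge
        · right
          have hmval : m = i + q - j := by rw [hm]; exact Nat.mod_eq_of_lt hlt
          omega
        · left
          have hmval : m = i + q - j - q := by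
            rw [hm, Nat.mod_eq_sub_mod hge, Nat.mod_eq_of_lt (by omega)]
          omega
      rcases this with h' | h'
      · rw [h']
      · rw [h', pow_add, rho_pow_q hq, mul_one]
    have hz2 : (rhoP q ^ j) z = (rhoP q ^ j) ((rhoP q ^ m) ∞) := by
      have e3 : (rhoP q ^ j) ((rhoP q ^ m) ∞) = (rhoP q ^ (j + m)) ∞ := by
        rw [pow_add, Equiv.Perm.mul_apply]
      rw [e3, hpow]
      have := hze
      rw [hφ, Equiv.Perm.mul_apply] at this
      exact g.injective this
    have hzY : z ∈ Yc := by
      have := (rhoP q ^ j).injective hz2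
      rw [this]
      exact rho_pow_infty_mem_Yc hq hmq
    exact Xc_inter_Yc hzX hzY
  have hF : Xc ∩ F ⊆ {(∞:RInf), ((0:ℝ):RInf)} := by
    rintro z ⟨hzX, hzF⟩
    rcases hzF with h' | h'
    · rcases hvert ia hia z hzX (by rw [← hu]; exact h') with h'' | h'' <;> simp [h'']
    · rcases hvert ib hib z hzX (by rw [← hv]; exact h') with h'' | h'' <;> simp [h'']
  have hT : IsPreconnected (⇑φ '' (Xc \ F)) :=
    (Xc_diff_preconnected F hF).image _ (continuous_of_mem_Gq hφG).continuousOn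
  have hTS : ⇑φ '' (Xc \ F) ⊆ ({u, v}ᶜ : Set RInf) := by
    rintro x ⟨z, ⟨hz1, hz2⟩, rfl⟩
    exact hz2
  have haT : a ∈ ⇑φ '' (Xc \ F) := by
    obtain ⟨z, hz, hze⟩ := hA.1
    exact ⟨z, ⟨hz, by rw [hFdef]; intro hmem; rw [Set.mem_preimage, hze] at hmem; exact ha hmem⟩, hze⟩
  have hbT : b ∈ ⇑φ '' (Xc \ F) := by
    obtain ⟨z, hz, hze⟩ := hA.2
    exact ⟨z, ⟨hz, by rw [hFdef]; intro hmem; rw [Set.mem_preimage, hze] at hmem; exact hb hmem⟩, hze⟩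
  exact (hT.subset_connectedComponentIn haT hTS) hbT

/-- a path whose endpoints lie in different connected components of
the complement of two distinct vertices `u`, `v` of a face must pass through `u`
or `v`. -/
theorem stmt9 (q : ℕ) (hq : 3 ≤ q) (P : Set RInf) (hP : IsFace q P)
    (u v : RInf) (hu : u ∈ P) (hv : v ∈ P) (huv : u ≠ v)
    (p : List RInf) (hchain : p.Chain' (FareyAdj q))
    (w0 wn : RInf) (h0 : p.head? = Option.some w0) (hn : p.getLast? = Option.some wn)
    (hw0 : w0 ∈ ({u, v}ᶜ : Set RInf)) (hwn : wn ∈ ({u, v}ᶜ : Set RInf))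
    (hdiff : wn ∉ connectedComponentIn ({u, v}ᶜ : Set RInf) w0) :
    u ∈ p ∨ v ∈ p := by
  by_contra hcon
  push_neg at hcon
  set S : Set RInf := ({u, v}ᶜ : Set RInf) with hS
  have hmem : ∀ w ∈ p, w ∈ S := by
    intro w hw
    intro hws
    rcases hws with rfl | hws
    · exact hcon.1 hw
    · rw [Set.mem_singleton_iff] at hws
      subst hws
      exact hcon.2 hw
  obtain ⟨g, hg, rfl⟩ := hP
  obtain ⟨xu, hxu, hxu'⟩ := hu
  obtain ⟨xv, hxv, hxv'⟩ := hv
  obtain ⟨ia, hia, rfl⟩ := hxu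
  obtain ⟨ib, hib, rfl⟩ := hxv
  have main : ∀ (l : List RInf), l.Chain' (FareyAdj q) → (∀ w ∈ l, w ∈ S) →
      ∀ a z, l.head? = Option.some a → l.getLast? = Option.some z →
        z ∈ connectedComponentIn S a := by
    intro l
    induction l with
    | nil => intro _ _ a z h0' _; simp at h0'
    | cons a rest ih =>
      intro hch hmeml a' z h0' hn'
      have ha' : a' = a := by
        simp only [List.head?_cons, Option.some.injEq] at h0'
        exact h0'.symm
      subst ha'
      cases rest with
      | nil =>
        simp only [List.getLast?_singleton, Option.some.injEq] at hn'
        subst hn'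
        exact mem_connectedComponentIn (hmeml a' (List.mem_cons_self))
      | cons b t =>
        have hch' := List.isChain_cons_cons.mp hch
        have hb : b ∈ connectedComponentIn S a' := by
          refine step_lemma hq hg hia hib hxu'.symm hxv'.symm hch'.1 ?_ ?_
          · exact hmeml a' (List.mem_cons_self)
          · exact hmeml b (List.mem_cons_of_mem _ (List.mem_cons_self))
        have hlast : (b :: t).getLast? = Option.some z := by
          rw [← hn']
          exact List.getLast?_cons_cons.symm
        have hz := ih hch'.2 (fun w hw => hmeml w (List.mem_cons_of_mem _ hw)) b z rfl hlast
        rw [← connectedComponentIn_eq hb] at hz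
        exact hz
  exact hdiff (main p hchain hmem w0 wn h0 hn)
end

section
/- Every vertex y ≠ ∞ of the graph 𝓕_∞ has exactly one geodesic Rosen continued fraction expansion; that is, there is exactly one tuple (b_1, …, b_n) of integers such that [b_1, …, b_n]_∞ is a geodesic Rosen continued fraction with value y. Furthermore, for any integers b_1, …, b_n (n ≥ 1), the continued fraction [b_1, …, b_n]_∞ is a geodesic Rosen continued fraction if and only if b_i ≠ 0 for i = 2, …, n. -/
open OnePoint

/-- `a/b` (in lowest terms, with exactly one of `a`, `b` even, and `1/0 = ∞`)
represents the point `v` of `ℝ∞`. -/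
def InfReps (v : RInf) (a b : ℤ) : Prop :=
  Int.gcd a b = 1 ∧ (Even a ↔ ¬ Even b) ∧
  ((b = 0 ∧ v = (∞ : RInf)) ∨ (b ≠ 0 ∧ v = (((a : ℝ) / (b : ℝ)) : RInf)))

/-- Vertices of the Farey graph `𝓕_∞` of the theta group. -/
def VertexInf (v : RInf) : Prop := ∃ a b : ℤ, InfReps v a b

/-- Adjacency in `𝓕_∞`: `|ad - bc| = 1`. -/
def AdjInf (u v : RInf) : Prop :=
  u ≠ v ∧ ∃ a b c d : ℤ, InfReps u a b ∧ InfReps v c d ∧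
    (a * d - b * c = 1 ∨ a * d - b * c = -1)

/-- The Möbius map `z ↦ 2b - 1/z`. -/
noncomputable def TInf (b : ℤ) : RInf → RInf := fun z =>
  match z with
  | Option.none => ((2 * b : ℝ) : RInf)
  | Option.some x => if x = 0 then (∞ : RInf) else ((2 * b - x⁻¹ : ℝ) : RInf)

/-- The value of the continued fraction `[b_1, …, b_n]_∞`. -/
noncomputable def RosenValueInf (bs : List ℤ) : RInf := bs.foldr TInf ∞

/-- Geodesic continued fractions with even integer coefficients. -/
def IsGeodesicRosenInf (bs : List ℤ) : Prop :=
  bs ≠ [] ∧ RosenValueInf bs ≠ ∞ ∧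
  ∀ cs : List ℤ, cs ≠ [] → RosenValueInf cs = RosenValueInf bs → bs.length ≤ cs.length

lemma TInf_none (b : ℤ) : TInf b ∞ = ((2*(b:ℝ) : ℝ) : RInf) := rfl
lemma TInf_some (b : ℤ) (x : ℝ) : TInf b (x : RInf) = if x = 0 then (∞:RInf) else ((2*b - x⁻¹ : ℝ) : RInf) := rfl
lemma RV_cons (b : ℤ) (bs : List ℤ) : RosenValueInf (b :: bs) = TInf b (RosenValueInf bs) := rfl
lemma RV_nil : RosenValueInf [] = ∞ := rfl

lemma TInf_some_ne (b : ℤ) (x : ℝ) (hx : x ≠ 0) :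
    TInf b (x : RInf) = ((2*b - x⁻¹ : ℝ) : RInf) := by rw [TInf_some, if_neg hx]

lemma TInf_some_zero (b : ℤ) : TInf b ((0:ℝ) : RInf) = (∞:RInf) := by
  rw [TInf_some, if_pos rfl]

lemma TInf_inj (b : ℤ) : Function.Injective (TInf b) := by
  intro u v huv
  cases u with
  | none =>
    cases v with
    | none => rfl
    | some y =>
      exfalso
      rw [show (Option.none : RInf) = (∞:RInf) from rfl, TInf_none] at huv
      rw [show (Option.some y : RInf) = ((y:ℝ) : RInf) from rfl] at huv
      by_cases hy : y = 0
      · rw [hy, TInf_some_zero] at huv; exact OnePoint.coe_ne_infty _ huv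
      · rw [TInf_some_ne b y hy] at huv
        have : 2*(b:ℝ) = 2*b - y⁻¹ := by exact_mod_cast huv
        have : y⁻¹ = 0 := by linarith
        exact hy (inv_eq_zero.mp this)
  | some x =>
    cases v with
    | none =>
      exfalso
      rw [show (Option.none : RInf) = (∞:RInf) from rfl, TInf_none] at huv
      rw [show (Option.some x : RInf) = ((x:ℝ) : RInf) from rfl] at huv
      by_cases hx : x = 0
      · rw [hx, TInf_some_zero] at huv; exact OnePoint.infty_ne_coe _ huv
      · rw [TInf_some_ne b x hx] at huv
        have : 2*(b:ℝ) - x⁻¹ = 2*b := by exact_mod_cast huv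
        have : x⁻¹ = 0 := by linarith
        exact hx (inv_eq_zero.mp this)
    | some y =>
      rw [show (Option.some x : RInf) = ((x:ℝ) : RInf) from rfl,
        show (Option.some y : RInf) = ((y:ℝ) : RInf) from rfl] at huv ⊢
      by_cases hx : x = 0 <;> by_cases hy : y = 0
      · rw [hx, hy]
      · exfalso
        rw [hx, TInf_some_zero, TInf_some_ne b y hy] at huv
        exact OnePoint.infty_ne_coe _ huv
      · exfalso
        rw [hy, TInf_some_zero, TInf_some_ne b x hx] at huv
        exact OnePoint.coe_ne_infty _ huv
      · rw [TInf_some_ne b x hx, TInf_some_ne b y hy] at huv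
        have h1 : 2*(b:ℝ) - x⁻¹ = 2*b - y⁻¹ := by exact_mod_cast huv
        have h2 : x⁻¹ = y⁻¹ := by linarith
        have := inv_injective h2
        rw [this]

/-- Value of a continued fraction with all coefficients after the first nonzero. -/
lemma good_val (b : ℤ) (bs : List ℤ) (h : ∀ x ∈ bs, x ≠ 0) :
    ∃ x : ℝ, RosenValueInf (b :: bs) = (x : RInf) ∧ |x - 2*(b:ℝ)| < 1 ∧
      (x = 2*(b:ℝ) ↔ bs = []) := by
  induction bs generalizing b with
  | nil =>
    refine ⟨2*(b:ℝ), ?_, by simp, by simp⟩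
    rw [RV_cons, RV_nil, TInf_none]
  | cons c bs' IH =>
    have hc : c ≠ 0 := h c (by simp)
    obtain ⟨y, hy, hy1, _⟩ := IH c (fun x hx => h x (by simp [hx]))
    have hcabs : (2:ℝ) ≤ |2*(c:ℝ)| := by
      have : (1:ℤ) ≤ |c| := Int.one_le_abs (by exact_mod_cast hc)
      have : (1:ℝ) ≤ |(c:ℝ)| := by rw [← Int.cast_abs]; exact_mod_cast this
      rw [abs_mul]
      simp only [abs_two]
      linarith
    have hyabs : 1 < |y| := by
      have h5 := abs_sub_abs_le_abs_sub (2*(c:ℝ)) y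
      rw [abs_sub_comm] at h5
      linarith
    have hy0 : y ≠ 0 := by
      intro h0; rw [h0, abs_zero] at hyabs; linarith
    refine ⟨2*(b:ℝ) - y⁻¹, ?_, ?_, ?_⟩
    · rw [RV_cons, hy, TInf_some_ne b y hy0]
    · have : |y⁻¹| < 1 := by
        rw [abs_inv]
        rw [inv_lt_one_iff₀]
        right; exact hyabs
      calc |2*(b:ℝ) - y⁻¹ - 2*b| = |y⁻¹| := by ring_nf; rw [abs_neg]
        _ < 1 := this
    · constructor
      · intro he
        exfalso
        have : y⁻¹ = 0 := by linarith
        exact hy0 (inv_eq_zero.mp this)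
      · intro he; exact absurd he (by simp)

lemma good_value_ne_infty (bs : List ℤ) (h0 : bs ≠ []) (h : ∀ x ∈ bs.tail, x ≠ 0) :
    RosenValueInf bs ≠ ∞ := by
  match bs with
  | b :: bs' =>
    obtain ⟨x, hx, -, -⟩ := good_val b bs' h
    rw [hx]; exact OnePoint.coe_ne_infty x

lemma good_unique : ∀ (bs cs : List ℤ), bs ≠ [] → cs ≠ [] →
    (∀ x ∈ bs.tail, x ≠ 0) → (∀ x ∈ cs.tail, x ≠ 0) →
    RosenValueInf bs = RosenValueInf cs → bs = cs := by
  intro bs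
  induction bs with
  | nil => intro cs h; exact absurd rfl h
  | cons b bs' IH =>
    rintro (_ | ⟨c, cs'⟩) - hcs hbt hct hv
    · exact absurd rfl hcs
    obtain ⟨x, hx, hx1, hx2⟩ := good_val b bs' hbt
    obtain ⟨y, hy, hy1, hy2⟩ := good_val c cs' hct
    have hxy : x = y := by
      rw [hx, hy] at hv; exact_mod_cast hv
    subst hxy
    have hbc : b = c := by
      have h1 : |2*(b:ℝ) - 2*(c:ℝ)| < 2 := by
        calc |2*(b:ℝ) - 2*c| ≤ |2*(b:ℝ) - x| + |x - 2*c| := by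
              have := abs_sub_le (2*(b:ℝ)) x (2*(c:ℝ)); linarith
          _ < 2 := by rw [abs_sub_comm (2*(b:ℝ)) x]; linarith
      have h2 : |(b:ℝ) - c| < 1 := by
        rw [show 2*(b:ℝ) - 2*c = 2*((b:ℝ)-c) by ring, abs_mul, abs_two] at h1
        linarith
      have h3 : |b - c| < 1 := by
        have : |((b - c : ℤ) : ℝ)| < 1 := by push_cast; exact h2
        exact_mod_cast (by rwa [← Int.cast_abs] at this : ((|b - c| : ℤ) : ℝ) < 1)
      have := Int.abs_lt_one_iff.mp h3
      omega
    subst hbc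
    rcases eq_or_ne bs' [] with hbe | hbe
    · have : x = 2*(b:ℝ) := hx2.mpr hbe
      have hce : cs' = [] := hy2.mp this
      rw [hbe, hce]
    · have hxne : x ≠ 2*(b:ℝ) := fun he => hbe (hx2.mp he)
      have hce : cs' ≠ [] := fun he => hxne (hy2.mpr he)
      have hv' : RosenValueInf bs' = RosenValueInf cs' := by
        rw [RV_cons, RV_cons] at hv
        exact TInf_inj b hv
      have := IH cs' hbe hce
        (fun z hz => hbt z (List.mem_of_mem_tail hz))
        (fun z hz => hct z (List.mem_of_mem_tail hz)) hv'
      rw [this]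
lemma T_comp (a d : ℤ) (z : RInf) : TInf a (TInf 0 (TInf d z)) = TInf (a + d) z := by
  have key : ∀ (w : ℝ), TInf a (TInf 0 ((w : ℝ) : RInf)) = if w = 0 then ((2*(a:ℝ) : ℝ) : RInf) else (((2*(a:ℝ) + w) : ℝ) : RInf) := by
    intro w
    by_cases hw : w = 0
    · rw [if_pos hw, hw, TInf_some_zero, TInf_none]
    · rw [if_neg hw, TInf_some_ne 0 w hw]
      have h2 : (2*((0:ℤ):ℝ) - w⁻¹) = -w⁻¹ := by push_cast; ring
      rw [h2]
      have h3 : (-w⁻¹ : ℝ) ≠ 0 := by simpa using hw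
      rw [TInf_some_ne a _ h3]
      congr 1
      rw [inv_neg, inv_inv]
      ring
  cases z with
  | none =>
    rw [show (Option.none : RInf) = (∞:RInf) from rfl, TInf_none, TInf_none, key]
    by_cases hd : (d:ℝ) = 0
    · have hd' : d = 0 := by exact_mod_cast hd
      rw [if_pos (by rw [hd]; ring), hd']
      push_cast; ring_nf
    · rw [if_neg (by intro h; apply hd; linarith)]
      push_cast; ring_nf
  | some x =>
    rw [show (Option.some x : RInf) = ((x:ℝ) : RInf) from rfl]
    by_cases hx : x = 0
    · rw [hx, TInf_some_zero d, TInf_none 0, TInf_some_zero (a+d)]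
      rw [show (2*(((0:ℤ)):ℝ) : ℝ) = (0:ℝ) by norm_num, TInf_some_zero a]
    · rw [TInf_some_ne d x hx, TInf_some_ne (a+d) x hx, key]
      by_cases hw : 2*(d:ℝ) - x⁻¹ = 0
      · rw [if_pos hw]
        congr 1
        push_cast
        linarith
      · rw [if_neg hw]
        congr 1
        push_cast
        ring

lemma reduce_zero : ∀ cs : List ℤ, (0:ℤ) ∈ cs.tail →
    ∃ cs' : List ℤ, cs'.length + 2 = cs.length ∧ RosenValueInf cs' = RosenValueInf cs := by
  intro cs
  induction cs with
  | nil => intro h; simp at h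
  | cons a cs2 IH =>
    intro h
    simp only [List.tail_cons] at h
    rcases cs2 with _ | ⟨c, cs3⟩
    · exact absurd h List.not_mem_nil
    by_cases hc : c = 0
    · subst hc
      rcases cs3 with _ | ⟨d, rest⟩
      · exact ⟨[], rfl, by
          rw [RV_nil, RV_cons, RV_cons, RV_nil, TInf_none,
            show ((2*((0:ℤ):ℝ) : ℝ) : RInf) = ((0:ℝ) : RInf) by norm_num,
            TInf_some_zero]⟩
      · refine ⟨(a + d) :: rest, by simp, ?_⟩
        rw [RV_cons, RV_cons, RV_cons, RV_cons, T_comp]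
    · have h3 : (0:ℤ) ∈ cs3 := by
        rcases List.mem_cons.mp h with hh | hh
        · exact absurd hh.symm hc
        · exact hh
      obtain ⟨cs2', hl, hv⟩ := IH (by simpa using h3)
      refine ⟨a :: cs2', by simp [← hl], ?_⟩
      rw [RV_cons, RV_cons, hv]

lemma good_min (bs : List ℤ) (hb0 : bs ≠ []) (hbt : ∀ x ∈ bs.tail, x ≠ 0) :
    ∀ n : ℕ, ∀ cs : List ℤ, cs.length ≤ n → cs ≠ [] →
      RosenValueInf cs = RosenValueInf bs → bs.length ≤ cs.length := by
  intro n
  induction n with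
  | zero => intro cs hn hcs _; exact absurd (List.length_eq_zero_iff.mp (Nat.le_zero.mp hn)) hcs
  | succ n IH =>
    intro cs hn hcs hv
    by_cases hct : ∀ x ∈ cs.tail, x ≠ 0
    · rw [good_unique bs cs hb0 hcs hbt hct hv.symm]
    · push_neg at hct
      obtain ⟨z, hz, hz0⟩ := hct
      subst hz0
      obtain ⟨cs', hl, hv'⟩ := reduce_zero cs hz
      have hcs' : cs' ≠ [] := by
        intro he
        rw [he, RV_nil] at hv'
        exact good_value_ne_infty bs hb0 hbt (hv.symm.trans hv'.symm)
      have := IH cs' (by omega) hcs' (hv'.trans hv)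
      omega
lemma exists_qr (a b : ℤ) (hb : 2 ≤ b.natAbs) (hg : Int.gcd a b = 1) :
    ∃ q r : ℤ, a = 2*b*q + r ∧ r ≠ 0 ∧ r.natAbs < b.natAbs := by
  set n : ℤ := (b.natAbs : ℤ) with hn
  have hn2 : 2 ≤ n := by omega
  have hm : (0:ℤ) < 2*n := by omega
  set e := a / (2*n) with he
  set r0 := a % (2*n) with hr0
  have hme : a = 2*n*e + r0 := by
    have h := Int.mul_ediv_add_emod a (2*n)
    linarith
  have hr0nn : 0 ≤ r0 := Int.emod_nonneg a (by omega)
  have hr0lt : r0 < 2*n := Int.emod_lt_of_pos a hm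
  have hnd : ¬ (n ∣ a) := by
    intro hd
    have hdb : n ∣ b := by rw [hn]; exact Int.natAbs_dvd.mpr dvd_rfl
    have : n ∣ (Int.gcd a b : ℤ) := Int.dvd_coe_gcd hd hdb
    rw [hg] at this
    have := Int.le_of_dvd one_pos this
    omega
  have hbn : b = n ∨ b = -n := by rw [hn]; exact Int.natAbs_eq b
  have hr00 : r0 ≠ 0 := by
    intro h0
    exact hnd ⟨2*e, by rw [h0] at hme; linear_combination hme⟩
  have hr0n : r0 ≠ n := by
    intro h0
    exact hnd ⟨2*e + 1, by rw [h0] at hme; linear_combination hme⟩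
  rcases lt_or_gt_of_ne hr0n with hlt | hgt
  · -- r = r0
    rcases hbn with hb' | hb'
    · exact ⟨e, r0, by rw [hb']; exact hme, hr00, by omega⟩
    · exact ⟨-e, r0, by rw [hb']; linear_combination hme, hr00, by omega⟩
  · -- r = r0 - 2n
    rcases hbn with hb' | hb'
    · exact ⟨e + 1, r0 - 2*n, by rw [hb']; linear_combination hme, by omega, by omega⟩
    · exact ⟨-(e + 1), r0 - 2*n, by rw [hb']; linear_combination hme, by omega, by omega⟩

lemma exists_good : ∀ n : ℕ, ∀ a b : ℤ, b.natAbs ≤ n → b ≠ 0 → Int.gcd a b = 1 →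
    (Even a ↔ ¬ Even b) →
    ∃ bs : List ℤ, bs ≠ [] ∧ (∀ x ∈ bs.tail, x ≠ 0) ∧
      RosenValueInf bs = (((a:ℝ)/(b:ℝ)) : RInf) := by
  intro n
  induction n with
  | zero =>
    intro a b hbn hb
    exact absurd (Int.natAbs_eq_zero.mp (Nat.le_zero.mp hbn)) hb
  | succ n IH =>
    intro a b hbn hb hg hpar
    by_cases hb1 : b.natAbs = 1
    · -- base case : b = ±1, a even
      have hbo : b = 1 ∨ b = -1 := by omega
      have hbe : ¬ Even b := by rcases hbo with h | h <;> rw [h] <;> decide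
      have hae : Even a := hpar.mpr hbe
      obtain ⟨k, hk⟩ := hae
      refine ⟨[k*b], by simp, by simp, ?_⟩
      rw [RV_cons, RV_nil, TInf_none]
      congr 1
      rcases hbo with h | h <;> subst h <;> subst hk <;> push_cast <;> ring_nf
    · have hb2 : 2 ≤ b.natAbs := by omega
      obtain ⟨q, r, heq, hr, hlt⟩ := exists_qr a b hb2 hg
      -- coprimality of -b and r
      have hcop : IsCoprime (a:ℤ) b := Int.isCoprime_iff_gcd_eq_one.mpr hg
      have hcop2 : IsCoprime r b := by
        have : IsCoprime (r + b*(2*q)) b := by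
          have hre : r + b*(2*q) = a := by linarith
          rwa [hre]
        exact IsCoprime.of_add_mul_left_left this
      have hg2 : Int.gcd (-b) r = 1 :=
        Int.isCoprime_iff_gcd_eq_one.mp hcop2.symm.neg_left
      -- parity
      have hEar : Even a ↔ Even r := by
        have : Even (a - r) := ⟨b*q, by linarith⟩
        exact Int.even_sub.mp this
      have hpar2 : Even (-b) ↔ ¬ Even r := by
        rw [even_neg, ← hEar]
        tauto
      obtain ⟨cs, hcs0, hcst, hcsv⟩ := IH (-b) r (by omega) hr hg2 hpar2
      rcases cs with _ | ⟨c, cs'⟩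
      · exact absurd rfl hcs0
      obtain ⟨x, hx, hx1, -⟩ := good_val c cs' (by simpa using hcst)
      have hxv : x = ((-b:ℤ):ℝ)/((r:ℤ):ℝ) := by
        rw [hx] at hcsv; exact_mod_cast hcsv
      have hbR : (b:ℝ) ≠ 0 := Int.cast_ne_zero.mpr hb
      have hrR : (r:ℝ) ≠ 0 := Int.cast_ne_zero.mpr hr
      have hxabs : 1 < |x| := by
        rw [hxv, abs_div]
        rw [one_lt_div (abs_pos.mpr hrR)]
        push_cast
        rw [abs_neg]
        have h1 : (r.natAbs : ℝ) < (b.natAbs : ℝ) := by exact_mod_cast hlt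
        rwa [← Int.cast_abs, ← Int.cast_abs, Int.abs_eq_natAbs, Int.abs_eq_natAbs,
          Int.cast_natCast, Int.cast_natCast]
      have hc : c ≠ 0 := by
        intro h0
        rw [h0] at hx1
        simp only [Int.cast_zero, mul_zero, sub_zero] at hx1
        linarith
      have hx0 : x ≠ 0 := by intro h0; rw [h0, abs_zero] at hxabs; linarith
      refine ⟨q :: c :: cs', by simp, ?_, ?_⟩
      · intro z hz
        rcases List.mem_cons.mp hz with h | h
        · rw [h]; exact hc
        · exact hcst z (by simpa using h)
      · rw [RV_cons, hx, TInf_some_ne q x hx0]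
        congr 1
        rw [hxv]
        have haR : (a:ℝ) = 2*b*q + r := by exact_mod_cast heq
        push_cast
        rw [inv_div, div_neg, sub_neg_eq_add, eq_div_iff hbR, add_mul,
          div_mul_cancel₀ _ hbR]
        linarith
lemma part2 (bs : List ℤ) (hbs : bs ≠ []) :
    IsGeodesicRosenInf bs ↔ ∀ x ∈ bs.tail, x ≠ 0 := by
  constructor
  · intro hg
    by_contra hct
    push_neg at hct
    obtain ⟨z, hz, hz0⟩ := hct
    subst hz0
    obtain ⟨cs', hl, hv⟩ := reduce_zero bs hz
    have hcs' : cs' ≠ [] := by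
      intro he
      rw [he, RV_nil] at hv
      exact hg.2.1 hv.symm
    have := hg.2.2 cs' hcs' hv
    omega
  · intro hbt
    exact ⟨hbs, good_value_ne_infty bs hbs hbt,
      fun cs hcs hv => good_min bs hbs hbt cs.length cs le_rfl hcs hv⟩

/-- every vertex of `𝓕_∞` other than `∞` has a unique geodesic
Rosen continued fraction expansion; and `[b_1, …, b_n]_∞` is geodesic exactly
when `b_2, …, b_n` are all nonzero. -/
theorem stmt12 :
    (∀ y : RInf, VertexInf y → y ≠ (∞ : RInf) →
      ∃! bs : List ℤ, IsGeodesicRosenInf bs ∧ RosenValueInf bs = y) ∧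
    (∀ bs : List ℤ, bs ≠ [] →
      (IsGeodesicRosenInf bs ↔ ∀ x ∈ bs.tail, x ≠ 0)) := by
  constructor
  · intro y hy hyinf
    obtain ⟨a, b, hgcd, hpar, hdisj⟩ := hy
    rcases hdisj with ⟨-, hy0⟩ | ⟨hb, hyv⟩
    · exact absurd hy0 hyinf
    obtain ⟨bs, hbs, hbt, hbv⟩ := exists_good b.natAbs a b le_rfl hb hgcd hpar
    have hbv' : RosenValueInf bs = y := by rw [hbv, hyv]
    refine ⟨bs, ⟨(part2 bs hbs).mpr hbt, hbv'⟩, ?_⟩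
    rintro bs' ⟨hg', hv'⟩
    exact good_unique bs' bs hg'.1 hbs ((part2 bs' hg'.1).mp hg') hbt
      (hv'.trans hbv'.symm)
  · exact part2
end

section
/- Let q = 2r where r ≥ 2 is an integer. Then for every integer k ≥ 0, the following identity of Möbius transformations of ℝ∞ holds: T_1^{r−1} ∘ (T_2 ∘ T_1^{r−2})^k ∘ T_2 ∘ T_1^{r−1} = σ ∘ τ_q^{−1} ∘ σ ∘ (T_{−1}^{r−2} ∘ T_{−2})^{k+1} ∘ T_{−1}^{r−2} ∘ τ_q^{−1}, where powers denote iterated composition. -/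
open OnePoint

/-- The transformation `T_b = τ_q^b ∘ σ`, i.e. `z ↦ b·λ_q − 1/z`, as a
permutation of `ℝ∞`. -/
noncomputable def TP (q : ℕ) (b : ℤ) : Equiv.Perm RInf := (tauP q) ^ b * sigmaP


noncomputable def mobF (a b c d : ℝ) : RInf → RInf := fun z =>
  match z with
  | Option.none => if c = 0 then (∞ : RInf) else ((a / c : ℝ) : RInf)
  | Option.some x =>
      if c * x + d = 0 then (∞ : RInf) else (((a * x + b) / (c * x + d) : ℝ) : RInf)

lemma mobF_infty (a b c d : ℝ) :
    mobF a b c d (∞ : RInf) = if c = 0 then (∞ : RInf) else ((a / c : ℝ) : RInf) := rfl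

lemma mobF_coe (a b c d x : ℝ) :
    mobF a b c d ((x : ℝ) : RInf) =
      if c * x + d = 0 then (∞ : RInf)
      else (((a * x + b) / (c * x + d) : ℝ) : RInf) := rfl

lemma rhoP_none (q : ℕ) : rhoP q (∞ : RInf) = ((lamq q : ℝ) : RInf) := by
  show tauP q (sigmaP (∞ : RInf)) = _
  have h1 : sigmaP (∞ : RInf) = ((0:ℝ) : RInf) := rfl
  rw [h1]
  show Option.some ((0:ℝ) + lamq q) = _
  rw [zero_add]
  rfl

lemma rhoP_some (q : ℕ) (x : ℝ) :
    rhoP q ((x : ℝ) : RInf) = if x = 0 then (∞ : RInf) else ((-x⁻¹ + lamq q : ℝ) : RInf) := by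
  show tauP q (sigmaP ((x : ℝ) : RInf)) = _
  have h1 : sigmaP ((x : ℝ) : RInf) =
      if x = 0 then (∞ : RInf) else ((-x⁻¹ : ℝ) : RInf) := rfl
  rw [h1]
  by_cases h : x = 0
  · rw [if_pos h, if_pos h]; rfl
  · rw [if_neg h, if_neg h]; rfl

lemma rhoP_mobF (q : ℕ) (a b c d : ℝ) (hdet : a * d - b * c ≠ 0) (z : RInf) :
    rhoP q (mobF a b c d z) = mobF (lamq q * a - c) (lamq q * b - d) a b z := by
  cases z with
  | none =>
    by_cases hc : c = 0
    · have ha : a ≠ 0 := fun h => hdet (by rw [h, hc]; ring)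
      have h1 : mobF a b c d Option.none = (∞ : RInf) := by simp [mobF, hc]
      have h2 : mobF (lamq q * a - c) (lamq q * b - d) a b Option.none
          = (((lamq q * a - c) / a : ℝ) : RInf) := by simp [mobF, ha]
      rw [h1, h2, rhoP_none, OnePoint.coe_eq_coe, hc]
      field_simp
      ring
    · have h1 : mobF a b c d Option.none = ((a / c : ℝ) : RInf) := by simp [mobF, hc]
      rw [h1, rhoP_some]
      by_cases ha : a = 0
      · have h2 : mobF (lamq q * a - c) (lamq q * b - d) a b Option.none = (∞ : RInf) := by
          simp [mobF, ha]
        rw [h2, if_pos (by rw [ha]; simp)]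
      · have h2 : mobF (lamq q * a - c) (lamq q * b - d) a b Option.none
            = (((lamq q * a - c) / a : ℝ) : RInf) := by simp [mobF, ha]
        rw [h2, if_neg (div_ne_zero ha hc), OnePoint.coe_eq_coe]
        field_simp
        ring
  | some x =>
    by_cases hd : c * x + d = 0
    · have hab : a * x + b ≠ 0 := by
        intro hab
        apply hdet
        have h3 : d = -(c*x) := by linarith
        have hb : b = -(a*x) := by linarith
        rw [h3, hb]; ring
      have h1 : mobF a b c d (Option.some x) = (∞ : RInf) := by simp [mobF, hd]
      have h2 : mobF (lamq q * a - c) (lamq q * b - d) a b (Option.some x)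
          = ((((lamq q * a - c) * x + (lamq q * b - d)) / (a * x + b) : ℝ) : RInf) := by
        simp [mobF, hab]
      rw [h1, h2, rhoP_none, OnePoint.coe_eq_coe]
      field_simp
      nlinarith [hd]
    · have h1 : mobF a b c d (Option.some x)
          = (((a * x + b) / (c * x + d) : ℝ) : RInf) := by simp [mobF, hd]
      rw [h1, rhoP_some]
      by_cases hn : a * x + b = 0
      · have h2 : mobF (lamq q * a - c) (lamq q * b - d) a b (Option.some x) = (∞ : RInf) := by
          simp [mobF, hn]
        rw [h2, if_pos (by rw [hn]; simp)]
      · have h2 : mobF (lamq q * a - c) (lamq q * b - d) a b (Option.some x)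
            = ((((lamq q * a - c) * x + (lamq q * b - d)) / (a * x + b) : ℝ) : RInf) := by
          simp [mobF, hn]
        rw [h2, if_neg (div_ne_zero hn hd), OnePoint.coe_eq_coe]
        field_simp
        ring

noncomputable def sinq (q : ℕ) (n : ℕ) : ℝ := Real.sin (n * (Real.pi / q))

lemma sinq_rec (q n : ℕ) : lamq q * sinq q (n+1) - sinq q n = sinq q (n+2) := by
  unfold lamq sinq
  have h1 : ((n+2 : ℕ) : ℝ) * (Real.pi/q) = ((n+1:ℕ):ℝ)*(Real.pi/q) + Real.pi/q := by
    push_cast; ring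
  have h2 : ((n : ℕ) : ℝ) * (Real.pi/q) = ((n+1:ℕ):ℝ)*(Real.pi/q) - Real.pi/q := by
    push_cast; ring
  rw [h1, h2, Real.sin_add, Real.sin_sub]; ring

lemma sinq_det (q n : ℕ) :
    sinq q (n+2) * (-(sinq q n)) - (-(sinq q (n+1))) * sinq q (n+1) = Real.sin (Real.pi/q) ^ 2 := by
  unfold sinq
  have h1 : ((n+2 : ℕ) : ℝ) * (Real.pi/q) = ((n+1:ℕ):ℝ)*(Real.pi/q) + Real.pi/q := by
    push_cast; ring
  have h2 : ((n : ℕ) : ℝ) * (Real.pi/q) = ((n+1:ℕ):ℝ)*(Real.pi/q) - Real.pi/q := by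
    push_cast; ring
  rw [h1, h2, Real.sin_add, Real.sin_sub]
  have pA := Real.sin_sq_add_cos_sq (((n+1:ℕ):ℝ)*(Real.pi/q))
  have pT := Real.sin_sq_add_cos_sq (Real.pi/q)
  linear_combination Real.sin (Real.pi/(q:ℝ))^2 * pA -
    Real.sin (((n+1:ℕ):ℝ)*(Real.pi/(q:ℝ)))^2 * pT

lemma sin_piq_ne (q : ℕ) (hq : 3 ≤ q) : Real.sin (Real.pi/q) ≠ 0 := by
  have hq1 : (1:ℝ) < q := by exact_mod_cast Nat.lt_of_lt_of_le (by norm_num) hq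
  refine ne_of_gt (Real.sin_pos_of_pos_of_lt_pi ?_ ?_)
  · positivity
  · exact div_lt_self Real.pi_pos hq1

lemma rhoP_pow (q : ℕ) (hq : 3 ≤ q) (n : ℕ) (z : RInf) :
    ((rhoP q) ^ (n+1)) z =
      mobF (sinq q (n+2)) (-(sinq q (n+1))) (sinq q (n+1)) (-(sinq q n)) z := by
  have hs : Real.sin (Real.pi/q) ≠ 0 := sin_piq_ne q hq
  have hs1 : sinq q 1 ≠ 0 := by simpa [sinq] using hs
  induction n with
  | zero =>
    simp only [Nat.zero_add, zero_add]
    rw [pow_one]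
    have h0 : sinq q 0 = 0 := by simp [sinq]
    have h2 : sinq q 2 = lamq q * sinq q 1 := by
      have := sinq_rec q 0; rw [h0] at this; linarith
    cases z with
    | none =>
      rw [show (Option.none : RInf) = (∞ : RInf) from rfl, rhoP_none, mobF_infty,
        if_neg hs1, OnePoint.coe_eq_coe, h2]
      field_simp
    | some x =>
      rw [show (Option.some x : RInf) = ((x : ℝ) : RInf) from rfl, rhoP_some, mobF_coe]
      by_cases hx : x = 0
      · rw [if_pos hx, if_pos (by rw [hx, h0]; ring)]
      · have hcx : sinq q 1 * x + -(sinq q 0) ≠ 0 := by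
          rw [h0]; simpa using mul_ne_zero hs1 hx
        rw [if_neg hx, if_neg hcx, OnePoint.coe_eq_coe, h0, h2]
        field_simp
        ring
  | succ n ih =>
    have det : sinq q (n+2) * (-(sinq q n)) - (-(sinq q (n+1))) * sinq q (n+1) ≠ 0 := by
      rw [sinq_det]; exact pow_ne_zero 2 hs
    rw [pow_succ', Equiv.Perm.mul_apply, ih, rhoP_mobF q _ _ _ _ det]
    rw [show lamq q * sinq q (n+2) - sinq q (n+1) = sinq q (n+1+2) from sinq_rec q (n+1),
      show lamq q * (-(sinq q (n+1))) - (-(sinq q n)) = -(sinq q (n+2)) from by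
        have := sinq_rec q n; linarith]

lemma rhoP_pow_q (q : ℕ) (hq : 3 ≤ q) : (rhoP q) ^ q = 1 := by
  obtain ⟨n, rfl⟩ : ∃ n, q = n + 1 := ⟨q - 1, by omega⟩
  have hs := sin_piq_ne (n+1) hq
  have hcast : ((n+1 : ℕ) : ℝ) ≠ 0 := by positivity
  ext z
  rw [Equiv.Perm.one_apply, rhoP_pow _ hq n z]

  have hsinq : sinq (n+1) (n+1) = 0 := by
    unfold sinq
    rw [show ((n+1:ℕ):ℝ) * (Real.pi/((n+1:ℕ):ℝ)) = Real.pi from by field_simp]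
    exact Real.sin_pi
  have hsinq2 : sinq (n+1) (n+2) = -Real.sin (Real.pi/((n+1:ℕ):ℝ)) := by
    unfold sinq
    rw [show ((n+2:ℕ):ℝ) * (Real.pi/((n+1:ℕ):ℝ)) = Real.pi + Real.pi/((n+1:ℕ):ℝ) from by
      field_simp; push_cast; ring]
    rw [Real.sin_add, Real.sin_pi, Real.cos_pi]; ring
  have hsinqn : sinq (n+1) n = Real.sin (Real.pi/((n+1:ℕ):ℝ)) := by
    unfold sinq
    rw [show ((n:ℕ):ℝ) * (Real.pi/((n+1:ℕ):ℝ)) = Real.pi - Real.pi/((n+1:ℕ):ℝ) from by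
      field_simp; push_cast; ring]
    exact Real.sin_pi_sub _
  rw [hsinq, hsinq2, hsinqn]
  cases z with
  | none => simp [mobF]; rfl
  | some x =>
    have hd : (0:ℝ) * x + -(Real.sin (Real.pi/((n+1:ℕ):ℝ))) ≠ 0 := by simpa using hs
    have hm : mobF (-Real.sin (Real.pi/((n+1:ℕ):ℝ))) (-(0:ℝ)) 0
        (-(Real.sin (Real.pi/((n+1:ℕ):ℝ)))) (Option.some x)
        = (((-Real.sin (Real.pi/((n+1:ℕ):ℝ)) * x + -(0:ℝ)) /
            ((0:ℝ) * x + -(Real.sin (Real.pi/((n+1:ℕ):ℝ))))  : ℝ) : RInf) := by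
      simp only [mobF, if_neg hd]
    rw [hm]
    show _ = ((x : ℝ) : RInf)
    rw [OnePoint.coe_eq_coe]
    have hs' : Real.sin (Real.pi/((n:ℝ) + 1)) ≠ 0 := by push_cast at hs; exact hs
    field_simp
    rw [div_eq_iff (by simpa using hs)]
    ring



lemma mul_pow_shift {G : Type*} [Group G] (a b : G) (n : ℕ) :
    (a * b) ^ n * a = a * (b * a) ^ n := by
  induction n with
  | zero => simp
  | succ n ih =>
      rw [pow_succ, mul_assoc, mul_assoc a b a, ← mul_assoc _ a (b*a), ih, mul_assoc,
        ← pow_succ]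

lemma word_lemma {G : Type*} [Group G] (σ τ : G) (hσ : σ * σ = 1) (m k : ℕ)
    (hR : (τ * σ) ^ (2 * (m + 2)) = 1) :
    (τ ^ (1:ℤ) * σ) ^ (m + 1) * ((τ ^ (2:ℤ) * σ) * (τ ^ (1:ℤ) * σ) ^ m) ^ k *
        (τ ^ (2:ℤ) * σ) * (τ ^ (1:ℤ) * σ) ^ (m + 1) =
      σ * τ⁻¹ * σ * ((τ ^ (-1:ℤ) * σ) ^ m * (τ ^ (-2:ℤ) * σ)) ^ (k + 1) *
        (τ ^ (-1:ℤ) * σ) ^ m * τ⁻¹ := by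
  have hσ' : σ⁻¹ = σ := inv_eq_of_mul_eq_one_right hσ
  have hσ2 : ∀ x : G, σ * (σ * x) = x := fun x => by rw [← mul_assoc, hσ, one_mul]
  obtain ⟨R, rfl⟩ : ∃ R, τ = R * σ := ⟨τ * σ⁻¹, by simp⟩
  have e1 : (R * σ) ^ (1:ℤ) = R * σ := zpow_one _
  have e2 : (R * σ) ^ (2:ℤ) = (R * σ) * (R * σ) := zpow_two _
  have em1 : (R * σ) ^ (-1:ℤ) = σ⁻¹ * R⁻¹ := by group
  have em2 : (R * σ) ^ (-2:ℤ) = σ⁻¹ * R⁻¹ * (σ⁻¹ * R⁻¹) := by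
    rw [show (-2:ℤ) = (-1) + (-1) by norm_num, zpow_add, em1]
  rw [e1, e2, em1, em2, hσ']
  simp only [mul_assoc, hσ, mul_one] at hR
  have paux : ∀ (a x : G) (n : ℕ), a ^ n * (a * x) = a ^ (n + 1) * x := by
    intro a x n; rw [← mul_assoc, ← pow_succ]
  have conj2 : ∀ (y : G) (n : ℕ), (σ * (y * σ)) ^ n = σ * (y ^ n * σ) := by
    intro y n
    have h := conj_pow (a := σ) (b := y) (i := n)
    rw [hσ'] at h
    simpa [mul_assoc] using h
  simp only [mul_assoc, hσ2, hσ, mul_one, mul_inv_rev, hσ', ← pow_succ']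
  rw [conj2]
  have base : (σ * (R⁻¹ ^ m * σ)) * (σ * (R⁻¹ * (σ * (R⁻¹ * σ)))) =
      σ * ((R⁻¹ ^ (m+1) * (σ * R⁻¹)) * σ) := by
    simp only [mul_assoc, hσ2, paux]
  rw [base, conj2]
  simp only [mul_assoc, hσ2, ← pow_succ, paux]
  have paux2 : ∀ (a x : G) (n : ℕ), a * (a ^ n * x) = a ^ (n + 1) * x := by
    intro a x n; rw [← mul_assoc, ← pow_succ']
  have L1 : R * (σ * R ^ (m+1+1)) = (R * (σ * R ^ (m+1))) * R := by
    simp only [mul_assoc, pow_succ]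
  rw [L1, ← mul_assoc ((R * (σ * R ^ (m+1))) ^ k), ← pow_succ, mul_pow_shift, mul_pow_shift]
  have hB : R⁻¹ ^ (m+1+1) = R ^ (m+1+1) := by
    have h2 : R ^ (m+1+1) * R ^ (m+1+1) = 1 := by
      rw [← pow_add]
      have : m+1+1 + (m+1+1) = 2 * (m+2) := by ring
      rw [this, hR]
    rw [inv_pow]
    exact inv_eq_of_mul_eq_one_right h2
  simp only [mul_assoc, ← pow_succ, paux, paux2, hB]
  rw [show R⁻¹ * R⁻¹ ^ (m+1) = R⁻¹ ^ (m+1+1) from (pow_succ' R⁻¹ (m+1)).symm, hB]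

/-- the identity
`T_1^{r-1} (T_2 T_1^{r-2})^k T_2 T_1^{r-1} = σ τ^{-1} σ (T_{-1}^{r-2} T_{-2})^{k+1} T_{-1}^{r-2} τ^{-1}`
in the Hecke group with `q = 2r`. -/
theorem stmt17 (r : ℕ) (hr : 2 ≤ r) (k : ℕ) :
    (TP (2 * r) 1) ^ (r - 1) * ((TP (2 * r) 2) * (TP (2 * r) 1) ^ (r - 2)) ^ k *
        TP (2 * r) 2 * (TP (2 * r) 1) ^ (r - 1) =
      sigmaP * (tauP (2 * r))⁻¹ * sigmaP *
        ((TP (2 * r) (-1)) ^ (r - 2) * TP (2 * r) (-2)) ^ (k + 1) *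
        (TP (2 * r) (-1)) ^ (r - 2) * (tauP (2 * r))⁻¹ := by
  obtain ⟨m, rfl⟩ : ∃ m, r = m + 2 := ⟨r - 2, by omega⟩
  have e1 : m + 2 - 1 = m + 1 := by omega
  have e2 : m + 2 - 2 = m := by omega
  have hsig : sigmaP * sigmaP = 1 := by
    ext z
    show sigmaFun (sigmaFun z) = z
    exact sigmaFun_invol z
  have hR : (tauP (2*(m+2)) * sigmaP) ^ (2*(m+2)) = 1 := by
    have h := rhoP_pow_q (2*(m+2)) (by omega)
    simp only [rhoP] at h
    exact h
  simp only [TP, e1, e2]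
  exact word_lemma sigmaP (tauP (2*(m+2))) hsig m k hR
end
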